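/- arXiv:2304.04296 — 2 statements merged into one kernel-verified Lean document; each statement's English description precedes it below -/
import Mathlib

section
/- For every integer k >= 2 and every proper coloring c of G_k, there exists a root-to-leaf branch of T_k whose k-1 tree nodes receive pairwise distinct colors under c; consequently c uses at least k colors. -/
/-- A structured tree: a rooted tree together with, at each internal node,
a graph on its children. A `leaf` is a tree with a single (leaf) node; a
`node ι c g` has children indexed by `ι`, subtrees `c i`, and the graph `g`
on the children. -/
inductive STree : Type 1 where
  | leaf : STree
  | node : (ι : Type) → (ι → STree) → SimpleGraph ι → STree

namespace STree

/-- The type of nodes of a structured tree. -/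
def NodeType : STree → Type
  | leaf => PUnit
  | node ι c _ => PUnit ⊕ Σ i : ι, NodeType (c i)

/-- The type of branches (root-to-leaf paths) of a structured tree. -/
def Branch : STree → Type
  | leaf => PUnit
  | node _ c _ => Σ i, Branch (c i)

/-- The root of a structured tree, as a node. -/
def root : (t : STree) → t.NodeType
  | leaf => PUnit.unit
  | node _ _ _ => Sum.inl PUnit.unit

/-- `onBranch t b u` means that the node `u` lies on the branch `b`. -/
def onBranch : (t : STree) → t.Branch → t.NodeType → Prop
  | leaf, _, _ => True
  | node _ c _, ⟨i, b⟩, u =>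
      match u with
      | Sum.inl _ => True
      | Sum.inr ⟨j, w⟩ => ∃ h : j = i, onBranch (c i) b (h ▸ w)

/-- Adjacency between tree nodes in the realization: the union of the edges
of the graphs `g(v)` placed on the children of each internal node `v`
(tree edges are *not* included). -/
def treeAdj : (t : STree) → t.NodeType → t.NodeType → Prop
  | leaf, _, _ => False
  | node ι c g, u, v =>
      match u, v with
      | Sum.inr ⟨i, u'⟩, Sum.inr ⟨j, v'⟩ =>
          (∃ h : i = j, treeAdj (c j) (h ▸ u') v') ∨
          (g.Adj i j ∧ u' = root (c i) ∧ v' = root (c j))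
      | _, _ => False

/-- The realization `R(T,g)` of a structured tree: its vertices are the tree
nodes together with the branches; edges are those of the graphs `g(v)`, plus
an edge from each branch vertex to every tree node lying on that branch. -/
def realization (t : STree) : SimpleGraph (t.NodeType ⊕ t.Branch) :=
  SimpleGraph.fromRel (fun x y =>
    match x, y with
    | Sum.inl u, Sum.inl v => treeAdj t u v
    | Sum.inl u, Sum.inr b => onBranch t b u
    | Sum.inr b, Sum.inl u => onBranch t b u
    | Sum.inr _, Sum.inr _ => False)

/-- The level of a node (the root is at level 1). -/
def level : (t : STree) → t.NodeType → ℕ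
  | leaf, _ => 1
  | node _ c _, u =>
      match u with
      | Sum.inl _ => 1
      | Sum.inr ⟨i, w⟩ => level (c i) w + 1

/-- `IsInternalGraphOf t ⟨ι, g⟩` means that `g` is the graph attached to some
internal node of `t` (on its children, indexed by `ι`). -/
inductive IsInternalGraphOf : STree → (Σ ι : Type, SimpleGraph ι) → Prop where
  | here : ∀ (ι : Type) (c : ι → STree) (g : SimpleGraph ι),
      IsInternalGraphOf (node ι c g) ⟨ι, g⟩
  | child : ∀ (ι : Type) (c : ι → STree) (g : SimpleGraph ι) (i : ι) (p),
      IsInternalGraphOf (c i) p → IsInternalGraphOf (node ι c g) p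

end STree

/-- Builds the structured tree in which all nodes at level `i` carry the
`i`-th graph of the list on their children (so the tree has `L.length + 1`
levels). -/
def buildTree : List (Σ V : Type, SimpleGraph V) → STree
  | [] => .leaf
  | ⟨ι, g⟩ :: rest => .node ι (fun _ => buildTree rest) g

/-- The realization of a structured tree, packaged with its vertex type. -/
def realizationSigma (t : STree) : Σ V : Type, SimpleGraph V :=
  ⟨t.NodeType ⊕ t.Branch, t.realization⟩

/-- `twincutList m` is the list `[G₂, G₃, …, G_{m+1}]` of twincut graphs. -/
def twincutList : ℕ → List (Σ V : Type, SimpleGraph V)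
  | 0 => []
  | m + 1 => twincutList m ++ [realizationSigma (buildTree (twincutList m))]

/-- The structured tree `T_{m+2}` whose realization is the twincut graph
`G_{m+2}`: it has `m + 1` levels, and every node at level `i ≤ m` carries
the graph `G_{i+1}` on its children. -/
def twincutTree (m : ℕ) : STree := buildTree (twincutList m)

/-- The twincut graphs: `G 1` is the one-vertex graph, and for `k ≥ 2`,
`G k` is the realization of the structured tree `T_k`. -/
def twincutG : ℕ → Σ V : Type, SimpleGraph V
  | 0 => ⟨PUnit, ⊥⟩
  | 1 => ⟨PUnit, ⊥⟩
  | (m + 2) => realizationSigma (twincutTree m)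


open STree in
theorem twincut_key {α : Type*} : ∀ (L : List (Σ V : Type, SimpleGraph V))
    (c : ((buildTree L).NodeType ⊕ (buildTree L).Branch) → α)
    (_hc : ∀ x y, (buildTree L).realization.Adj x y → c x ≠ c y)
    (F : Finset α) (_hF : c (Sum.inl (buildTree L).root) ∉ F)
    (_Hg : ∀ i (h : i < L.length) (c' : (L.get ⟨i, h⟩).1 → α),
        (∀ x y, (L.get ⟨i, h⟩).2.Adj x y → c' x ≠ c' y) →
        ∃ s : Finset α, F.card + i + 2 ≤ s.card ∧ ↑s ⊆ Set.range c'),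
    ∃ (b : (buildTree L).Branch) (ns : List (buildTree L).NodeType),
      ns.length = L.length + 1 ∧
      (∀ u, (buildTree L).onBranch b u ↔ u ∈ ns) ∧
      (ns.map (fun u => c (Sum.inl u))).Nodup ∧
      (∀ u ∈ ns, c (Sum.inl u) ∉ F) := by
  intro L
  induction L with
  | nil =>
    intro c hc F hF Hg
    refine ⟨PUnit.unit, [PUnit.unit], rfl, ?_, ?_, ?_⟩
    · intro u
      constructor
      · intro _; cases u; exact List.Mem.head _
      · intro _; trivial
    · exact List.nodup_singleton _
    · intro u hu
      cases u
      exact hF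
  | cons p rest IH =>
    obtain ⟨ι, g⟩ := p
    intro c hc F hF Hg
    classical
    set c₀ : α := c (Sum.inl (Sum.inl PUnit.unit)) with hc₀
    -- children coloring
    set c' : ι → α := fun i => c (Sum.inl (Sum.inr ⟨i, (buildTree rest).root⟩)) with hc'
    have hc'proper : ∀ x y, g.Adj x y → c' x ≠ c' y := by
      intro x y hxy
      apply hc
      rw [STree.realization, SimpleGraph.fromRel_adj]
      refine ⟨?_, Or.inl ?_⟩
      · intro h
        apply g.ne_of_adj hxy
        injection (Sum.inl.inj h) with h2
        exact congrArg Sigma.fst h2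
      · exact Or.inr ⟨hxy, rfl, rfl⟩
    have : ∃ s : Finset α, F.card + 0 + 2 ≤ s.card ∧ ↑s ⊆ Set.range c' :=
      Hg 0 (Nat.succ_pos _) c' hc'proper
    obtain ⟨s, hscard, hsrange⟩ := this
    have hc₀F : c₀ ∉ F := hF
    have hex : ∃ a ∈ s, a ∉ insert c₀ F := by
      by_contra hcon
      push_neg at hcon
      have : s ⊆ insert c₀ F := fun a ha => hcon a ha
      have := Finset.card_le_card this
      have h2 : (insert c₀ F).card ≤ F.card + 1 := Finset.card_insert_le _ _
      omega
    obtain ⟨a, has, haF⟩ := hex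
    obtain ⟨i₀, hi₀⟩ := hsrange has
    -- the sub-coloring
    set emb : ((buildTree rest).NodeType ⊕ (buildTree rest).Branch) →
        ((buildTree (⟨ι, g⟩ :: rest)).NodeType ⊕ (buildTree (⟨ι, g⟩ :: rest)).Branch) :=
      Sum.elim (fun u => Sum.inl (Sum.inr ⟨i₀, u⟩)) (fun b => Sum.inr ⟨i₀, b⟩) with hemb
    set c'' : ((buildTree rest).NodeType ⊕ (buildTree rest).Branch) → α :=
      fun x => c (emb x) with hc''
    have hembinj : Function.Injective emb := by
      intro x y hxy
      rcases x with u | b <;> rcases y with v | b' <;>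
        simp only [hemb, Sum.elim_inl, Sum.elim_inr] at hxy
      · obtain ⟨-, h2⟩ := Sigma.mk.inj_iff.mp (Sum.inr.inj (Sum.inl.inj hxy))
        rw [eq_of_heq h2]
      · exact absurd hxy (by simp)
      · exact absurd hxy (by simp)
      · obtain ⟨-, h2⟩ := Sigma.mk.inj_iff.mp (Sum.inr.inj hxy)
        rw [eq_of_heq h2]
    have hc''proper : ∀ x y, (buildTree rest).realization.Adj x y → c'' x ≠ c'' y := by
      intro x y hxy
      apply hc
      rw [STree.realization, SimpleGraph.fromRel_adj] at hxy ⊢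
      obtain ⟨hne, hrel⟩ := hxy
      refine ⟨fun h => hne (hembinj h), ?_⟩
      rcases x with u | b <;> rcases y with v | b'
      · rcases hrel with h | h
        · exact Or.inl (Or.inl ⟨rfl, h⟩)
        · exact Or.inr (Or.inl ⟨rfl, h⟩)
      · rcases hrel with h | h
        · exact Or.inl ⟨rfl, h⟩
        · exact Or.inr ⟨rfl, h⟩
      · rcases hrel with h | h
        · exact Or.inl ⟨rfl, h⟩
        · exact Or.inr ⟨rfl, h⟩
      · rcases hrel with h | h <;> exact h.elim
    have hF'' : c'' (Sum.inl (buildTree rest).root) ∉ insert c₀ F := by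
      have : c'' (Sum.inl (buildTree rest).root) = c' i₀ := rfl
      rw [this, hi₀]; exact haF
    have hcard' : (insert c₀ F).card = F.card + 1 := Finset.card_insert_of_notMem hc₀F
    have Hg'' : ∀ i (h : i < rest.length) (cc : (rest.get ⟨i, h⟩).1 → α),
        (∀ x y, (rest.get ⟨i, h⟩).2.Adj x y → cc x ≠ cc y) →
        ∃ s : Finset α, (insert c₀ F).card + i + 2 ≤ s.card ∧ ↑s ⊆ Set.range cc := by
      intro i h cc hcc
      obtain ⟨s, hs1, hs2⟩ := Hg (i + 1) (Nat.succ_lt_succ h) cc hcc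
      exact ⟨s, by omega, hs2⟩
    obtain ⟨b', ns', hlen', hmem', hnodup', havoid'⟩ :=
      IH c'' hc''proper (insert c₀ F) hF'' Hg''
    refine ⟨⟨i₀, b'⟩, Sum.inl PUnit.unit :: ns'.map (fun u => Sum.inr ⟨i₀, u⟩),
      congrArg (· + 1) ((List.length_map ..).trans hlen'), ?_, ?_, ?_⟩
    · intro u
      rcases u with pu | ⟨j, w⟩
      · cases pu
        exact ⟨fun _ => List.Mem.head _, fun _ => trivial⟩
      · constructor
        · rintro ⟨rfl, hw⟩
          simp only [List.mem_cons, List.mem_map]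
          exact List.mem_cons_of_mem _ (List.mem_map_of_mem ((hmem' w).mp hw))
        · intro hmem
          simp only [List.mem_cons, List.mem_map] at hmem
          rcases (List.mem_cons.mp hmem).imp_right List.mem_map.mp with h | ⟨w', hw', heq⟩
          · exact absurd h (by simp)
          · obtain ⟨h1, h2⟩ := Sigma.mk.inj_iff.mp (Sum.inr.inj heq)
            subst h1
            refine ⟨rfl, ?_⟩
            have : w' = w := eq_of_heq h2
            subst this
            exact (hmem' w').mpr hw'
    · simp only [List.map_cons, List.map_map, List.nodup_cons]
      constructor
      · intro a ha heqa
        obtain ⟨x, hx, rfl⟩ := List.mem_map.mp ha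
        obtain ⟨w, hw, rfl⟩ := List.mem_map.mp hx
        have h2 : c'' (Sum.inl w) = c₀ := heqa.symm
        have := havoid' w hw
        rw [h2] at this
        exact this (Finset.mem_insert_self c₀ F)
      · have : ((fun u => c (Sum.inl u)) ∘ fun u => (Sum.inr ⟨i₀, u⟩ : (buildTree (⟨ι, g⟩ :: rest)).NodeType))
            = fun u => c'' (Sum.inl u) := rfl
        exact (congrArg List.Nodup (List.map_map ..)).mpr hnodup'
    · intro u hu
      simp only [List.mem_cons, List.mem_map] at hu
      rcases (List.mem_cons.mp hu).imp_right List.mem_map.mp with rfl | ⟨w, hw, rfl⟩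
      · exact hc₀F
      · have : c (Sum.inl (Sum.inr ⟨i₀, w⟩)) = c'' (Sum.inl w) := rfl
        rw [this]
        intro hmem
        exact havoid' _ hw (Finset.mem_insert_of_mem hmem)

theorem twincutList_length (m : ℕ) : (twincutList m).length = m := by
  induction m with
  | zero => rfl
  | succ m ih => simp [twincutList, ih]

theorem twincutList_get (m i : ℕ) (h : i < (twincutList m).length) :
    (twincutList m).get ⟨i, h⟩ = realizationSigma (twincutTree i) := by
  induction m with
  | zero => simp [twincutList] at h
  | succ m ih =>
    have hl := twincutList_length m
    by_cases hi : i < (twincutList m).length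
    · have : (twincutList (m + 1)).get ⟨i, h⟩ = (twincutList m).get ⟨i, hi⟩ := by
        simp only [twincutList, List.get_eq_getElem]
        exact List.getElem_append_left hi
      rw [this, ih hi]
    · have him : i = m := by
        have := twincutList_length (m + 1)
        omega
      subst him
      have : (twincutList (i + 1)).get ⟨i, h⟩
          = realizationSigma (buildTree (twincutList i)) := by
        simp only [twincutList, List.get_eq_getElem]
        have : i = (twincutList i).length := hl.symm
        rw [List.getElem_append_right (by omega)]
        simp [hl]
      rw [this]
      rfl

/-- for `k = m + 2 ≥ 2`, every proper coloring `c` of `G_k`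
admits a root-to-leaf branch of `T_k` whose tree nodes receive pairwise
distinct colors; consequently `c` uses at least `k` colors. -/
theorem twincut_rainbow_branch (m : ℕ) {α : Type*}
    (c : ((twincutTree m).NodeType ⊕ (twincutTree m).Branch) → α)
    (hc : ∀ x y, (twincutTree m).realization.Adj x y → c x ≠ c y) :
    (∃ b : (twincutTree m).Branch,
      ∀ u v : (twincutTree m).NodeType,
        (twincutTree m).onBranch b u → (twincutTree m).onBranch b v →
        u ≠ v → c (Sum.inl u) ≠ c (Sum.inl v)) ∧
    ∃ s : Finset α, s.card = m + 2 ∧ ↑s ⊆ Set.range c := by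
  induction m using Nat.strong_induction_on generalizing α with
  | _ m IH =>
  classical
  have Hg : ∀ i (h : i < (twincutList m).length)
      (c' : ((twincutList m).get ⟨i, h⟩).1 → α),
      (∀ x y, ((twincutList m).get ⟨i, h⟩).2.Adj x y → c' x ≠ c' y) →
      ∃ s : Finset α, (∅ : Finset α).card + i + 2 ≤ s.card ∧ ↑s ⊆ Set.range c' := by
    intro i h
    rw [twincutList_get m i h]
    intro c' hc'
    have hi : i < m := by rw [twincutList_length] at h; exact h
    obtain ⟨-, s, hs1, hs2⟩ := IH i hi c' hc'
    exact ⟨s, by simp [hs1], hs2⟩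
  obtain ⟨b, ns, hlen, hmem, hnodup, -⟩ :=
    twincut_key (twincutList m) c hc ∅ (Finset.notMem_empty _) Hg
  constructor
  · refine ⟨b, ?_⟩
    intro u v hu hv huv hcc
    exact huv (List.inj_on_of_nodup_map hnodup ((hmem u).mp hu) ((hmem v).mp hv) hcc)
  · have hnot : c (Sum.inr b) ∉ (ns.map (fun u => c (Sum.inl u))).toFinset := by
      intro hmem2
      rw [List.mem_toFinset] at hmem2
      obtain ⟨u, hu, hequ⟩ := List.mem_map.mp hmem2
      have hbr : (twincutTree m).onBranch b u := (hmem u).mpr hu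
      have hadj : (twincutTree m).realization.Adj (Sum.inl u) (Sum.inr b) := by
        rw [STree.realization, SimpleGraph.fromRel_adj]
        exact ⟨by simp, Or.inl hbr⟩
      exact hc _ _ hadj hequ
    refine ⟨insert (c (Sum.inr b)) (ns.map (fun u => c (Sum.inl u))).toFinset, ?_, ?_⟩
    · have h1 : (ns.map (fun u => c (Sum.inl u))).toFinset.card
          = (ns.map (fun u => c (Sum.inl u))).length := List.toFinset_card_of_nodup hnodup
      rw [Finset.card_insert_of_notMem hnot, h1]
      exact congrArg (· + 1) (((List.length_map ..).trans hlen).trans (congrArg (· + 1) (twincutList_length m)))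
    · intro a ha
      simp only [Finset.coe_insert, Set.mem_insert_iff, Finset.mem_coe,
        List.mem_toFinset, List.mem_map] at ha
      rcases ha.imp_right List.mem_map.mp with rfl | ⟨u, -, rfl⟩
      · exact ⟨Sum.inr b, rfl⟩
      · exact ⟨Sum.inl u, rfl⟩
end

section
/- For every k >= 1 and every vertex v of the twincut graph G_k, there exists a proper k-coloring of G_k in which v is the unique vertex receiving color k. -/
namespace TwincutProof
open STree

lemma card_filter_lt (K m : ℕ) (h : m ≤ K) :
    (Finset.univ.filter (fun x : Fin K => x.val < m)).card = m := by
  have he : (Finset.univ.filter (fun x : Fin K => x.val < m)) =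
      Finset.image (Fin.castLE h) Finset.univ := by
    ext x
    simp only [Finset.mem_filter, Finset.mem_image, Finset.mem_univ, true_and]
    constructor
    · intro hx; exact ⟨⟨x.val, hx⟩, Fin.ext rfl⟩
    · rintro ⟨y, rfl⟩; exact y.isLt
  rw [he, Finset.card_image_of_injective _ (Fin.castLE_injective h), Finset.card_univ,
    Fintype.card_fin]

lemma exists_avoid (K n : ℕ) (h : n < K - 1) (S : Finset (Fin K))
    (hS : (S.filter (fun x => x.val < K - 1)).card ≤ n) :
    ∃ x : Fin K, x.val < K - 1 ∧ x ∉ S := by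
  by_contra hc
  push_neg at hc
  have hsub : (Finset.univ.filter (fun x : Fin K => x.val < K - 1)) ⊆
      S.filter (fun x => x.val < K - 1) := by
    intro x hx
    simp only [Finset.mem_filter, Finset.mem_univ, true_and] at hx ⊢
    exact ⟨hc x hx, hx⟩
  have hcard := Finset.card_le_card hsub
  rw [card_filter_lt K (K-1) (Nat.sub_le _ _)] at hcard
  omega

def branchList : (t : STree) → t.Branch → List t.NodeType
  | .leaf, _ => [PUnit.unit]
  | .node _ c _, ⟨i, b⟩ =>
      Sum.inl PUnit.unit :: (branchList (c i) b).map (fun u => Sum.inr ⟨i, u⟩)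

lemma mem_branchList : ∀ (t : STree) (b : t.Branch) (u : t.NodeType),
    onBranch t b u → u ∈ branchList t b := by
  intro t
  induction t with
  | leaf => intro b u _; cases u; exact List.Mem.head _
  | node ι c g ih =>
    rintro ⟨i, b⟩ u hu
    cases u with
    | inl p => cases p; exact List.Mem.head _
    | inr s =>
      obtain ⟨j, w⟩ := s
      obtain ⟨h, hw⟩ := hu
      subst h
      simp only [branchList, List.mem_cons, List.mem_map]
      exact List.Mem.tail _ (List.mem_map_of_mem (f := fun u => Sum.inr (Sigma.mk j u)) (ih _ b w hw))

/-- Hypothesis: the `i`-th graph of `L` has, for every vertex, a proper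
`(n+i+2)`-coloring in which that vertex is the unique one with the top color. -/
def Hyp (n : ℕ) (L : List (Σ V : Type, SimpleGraph V)) : Prop :=
  ∀ (i : ℕ) (h : i < L.length) (m : ℕ) (hm : m = n + i + 2)
    (v : (L.get ⟨i, h⟩).1),
    ∃ c : (L.get ⟨i, h⟩).1 → Fin m,
      (∀ a b, (L.get ⟨i, h⟩).2.Adj a b → c a ≠ c b) ∧
      c v = ⟨m - 1, by omega⟩ ∧
      (∀ u, c u = ⟨m - 1, by omega⟩ → u = v)

lemma Hyp.tail {n : ℕ} {p} {rest} (H : Hyp n (p :: rest)) : Hyp (n + 1) rest := by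
  intro i h m hm v
  exact H (i + 1) (by simpa using Nat.succ_lt_succ h) m (by omega) v


lemma branchList_cons {ι : Type} (g : SimpleGraph ι) (rest) (i : ι) (b) :
    branchList (buildTree (⟨ι, g⟩ :: rest)) ⟨i, b⟩ =
      Sum.inl PUnit.unit :: (branchList (buildTree rest) b).map (fun u => Sum.inr ⟨i, u⟩) := rfl

lemma free : ∀ (L : List (Σ V : Type, SimpleGraph V)) (n K : ℕ),
    n + L.length + 2 = K → Hyp n L →
    ∀ (r : Fin K) (F : Finset (Fin K)),
    ((F ∪ {r}).filter (fun x => x.val < K - 1)).card ≤ n →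
    ∃ c : (buildTree L).NodeType → Fin K,
      (∀ u v, treeAdj (buildTree L) u v → c u ≠ c v) ∧
      c (root (buildTree L)) = r ∧
      (∀ u, u ≠ root (buildTree L) → (c u).val < K - 1) ∧
      (∀ b : (buildTree L).Branch, ∃ x : Fin K, x.val < K - 1 ∧ x ∉ F ∧
        x ∉ (branchList (buildTree L) b).map c) := by
  intro L
  induction L with
  | nil =>
    intro n K hK H r F hF
    simp only [List.length_nil] at hK
    refine ⟨fun _ => r, ?_, rfl, ?_, ?_⟩
    · intro u v h; exact h.elim
    · intro u hu; cases u; exact absurd rfl hu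
    · intro b
      obtain ⟨x, hx1, hx2⟩ := exists_avoid K n (by omega) (F ∪ {r}) hF
      refine ⟨x, hx1, fun hxF => hx2 (Finset.mem_union_left _ hxF), ?_⟩
      intro hmem
      have : x = r := by
        cases b
        simpa [branchList, buildTree] using hmem
      exact hx2 (by simp [this])
  | cons p rest ih =>
    obtain ⟨ι, g⟩ := p
    intro n K hK H r F hF
    simp only [List.length_cons] at hK
    have hK' : n + 1 + rest.length + 2 = K := by omega
    have Ht := H.tail
    have hn2K : n + 2 ≤ K := by omega
    have hn2K1 : n + 2 ≤ K - 1 := by omega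
    have hproper : ∃ c0 : ι → Fin (n + 2), ∀ a b, g.Adj a b → c0 a ≠ c0 b := by
      cases isEmpty_or_nonempty ι with
      | inl he => exact ⟨fun i => (he.false i).elim, fun a b _ => (he.false a).elim⟩
      | inr hne =>
        obtain ⟨v⟩ := hne
        obtain ⟨c0, h1, -, -⟩ := H 0 (by simp) (n + 2) (by omega) v
        exact ⟨c0, h1⟩
    obtain ⟨c0, hc0⟩ := hproper
    have hsub : ∀ i : ι, ∃ c : (buildTree rest).NodeType → Fin K,
        (∀ u v, treeAdj (buildTree rest) u v → c u ≠ c v) ∧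
        c (root (buildTree rest)) = Fin.castLE hn2K (c0 i) ∧
        (∀ u, u ≠ root (buildTree rest) → (c u).val < K - 1) ∧
        (∀ b, ∃ x : Fin K, x.val < K - 1 ∧ x ∉ (F ∪ {r}) ∧
          x ∉ (branchList (buildTree rest) b).map c) := by
      intro i
      apply ih (n + 1) K hK' Ht (Fin.castLE hn2K (c0 i)) (F ∪ {r})
      have hsub2 : (F ∪ {r} ∪ {Fin.castLE hn2K (c0 i)}).filter (fun x => x.val < K - 1) ⊆
          (F ∪ {r}).filter (fun x => x.val < K - 1) ∪ {Fin.castLE hn2K (c0 i)} := by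
        intro x hx
        simp only [Finset.mem_filter, Finset.mem_union, Finset.mem_singleton] at hx ⊢
        tauto
      have h1 := Finset.card_le_card hsub2
      have h2 := Finset.card_union_le
        ((F ∪ {r}).filter (fun x => x.val < K - 1)) ({Fin.castLE hn2K (c0 i)} : Finset (Fin K))
      simp only [Finset.card_singleton] at h2
      omega
    choose cf hf1 hf2 hf3 hf4 using hsub
    refine ⟨fun u => match u with
      | Sum.inl _ => r
      | Sum.inr ⟨i, u'⟩ => cf i u', ?_, rfl, ?_, ?_⟩
    · intro u v h
      rcases u with u0 | ⟨i, u'⟩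
      · exact h.elim
      · rcases v with v0 | ⟨j, v'⟩
        · exact h.elim
        · rcases h with ⟨hij, hrec⟩ | ⟨hadj, hu, hv⟩
          · subst hij
            exact hf1 i u' v' hrec
          · subst hu; subst hv
            show cf i (root (buildTree rest)) ≠ cf j (root (buildTree rest))
            rw [hf2 i, hf2 j]
            exact fun e => hc0 i j hadj (Fin.castLE_injective hn2K e)
    · intro u hu
      rcases u with u0 | ⟨i, u'⟩
      · cases u0; exact absurd rfl hu
      · by_cases hu' : u' = root (buildTree rest)
        · subst hu'
          show (cf i (root (buildTree rest))).val < K - 1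
          rw [hf2 i]
          exact lt_of_lt_of_le (c0 i).isLt hn2K1
        · exact hf3 i u' hu'
    · rintro ⟨i, b'⟩
      obtain ⟨x, hx1, hx2, hx3⟩ := hf4 i b'
      refine ⟨x, hx1, fun h => hx2 (Finset.mem_union_left _ h), ?_⟩
      rw [branchList_cons]
      intro hmem
      rcases List.mem_cons.mp hmem with h | h
      · exact hx2 (by simp [h])
      · replace h : x ∈ (branchList (buildTree rest) b').map (cf i) := by
          obtain ⟨u, hu, rfl⟩ := List.mem_map.mp h
          obtain ⟨u', hu', rfl⟩ := List.mem_map.mp hu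
          exact List.mem_map_of_mem (f := cf i) hu'
        exact hx3 h


lemma target : ∀ (L : List (Σ V : Type, SimpleGraph V)) (n K : ℕ),
    n + L.length + 2 = K → Hyp n L →
    ∀ (w : (buildTree L).NodeType ⊕ (buildTree L).Branch),
    ∃ c : (buildTree L).NodeType → Fin K,
      (∀ u v, treeAdj (buildTree L) u v → c u ≠ c v) ∧
      (∀ u, Sum.inl u ≠ w → (c u).val < K - 1) ∧
      (∀ u, Sum.inl u = w → (c u).val = K - 1) ∧
      (w ≠ Sum.inl (root (buildTree L)) → (c (root (buildTree L))).val = n) ∧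
      (∀ b : (buildTree L).Branch, w ≠ Sum.inr b →
        ∃ x : Fin K, n ≤ x.val ∧ x.val < K - 1 ∧
          x ∉ (branchList (buildTree L) b).map c) := by
  intro L
  induction L with
  | nil =>
    intro n K hK H w
    simp only [List.length_nil] at hK
    rcases w with w0 | w0 <;> cases w0
    · refine ⟨fun _ => ⟨n + 1, by omega⟩, ?_, ?_, ?_, ?_, ?_⟩
      · intro u v h; exact h.elim
      · intro u hu; cases u; exact absurd rfl hu
      · intro u _; show n + 1 = K - 1; omega
      · intro hne; exact absurd rfl hne
      · intro b _
        cases b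
        refine ⟨⟨n, by omega⟩, le_refl n, (by show n < K - 1; omega), ?_⟩
        intro hmem
        have : (⟨n, by omega⟩ : Fin K) = ⟨n + 1, by omega⟩ := by
          simpa [branchList] using hmem
        have := congrArg Fin.val this
        simp at this
    · refine ⟨fun _ => ⟨n, by omega⟩, ?_, ?_, ?_, ?_, ?_⟩
      · intro u v h; exact h.elim
      · intro u _; show n < K - 1; omega
      · intro u hu; exact absurd hu (by simp)
      · intro _; rfl
      · intro b hb; cases b; exact absurd rfl hb
  | cons p rest ih =>
    obtain ⟨ι, g⟩ := p
    intro n K hK H w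
    simp only [List.length_cons] at hK
    have hK' : n + 1 + rest.length + 2 = K := by omega
    have Ht := H.tail
    have hn2K : n + 2 ≤ K := by omega
    have hn2K1 : n + 2 ≤ K - 1 := by omega
    classical
    have key : ∀ (i₀ : ι) (w'' : (buildTree rest).NodeType ⊕ (buildTree rest).Branch),
        ∃ c : (buildTree (⟨ι, g⟩ :: rest)).NodeType → Fin K,
          (∀ u v, treeAdj (buildTree (⟨ι, g⟩ :: rest)) u v → c u ≠ c v) ∧
          (∀ (i : ι) u', (i ≠ i₀ ∨ Sum.inl u' ≠ w'') →
            (c (Sum.inr ⟨i, u'⟩)).val < K - 1) ∧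
          (∀ u', Sum.inl u' = w'' → (c (Sum.inr ⟨i₀, u'⟩)).val = K - 1) ∧
          c (Sum.inl PUnit.unit) = ⟨n, by omega⟩ ∧
          (∀ (i : ι) (b' : (buildTree rest).Branch), (i ≠ i₀ ∨ w'' ≠ Sum.inr b') →
            ∃ x : Fin K, n ≤ x.val ∧ x.val < K - 1 ∧
              x ∉ (branchList (buildTree (⟨ι, g⟩ :: rest)) ⟨i, b'⟩).map c) := by
      intro i₀ w''
      obtain ⟨c0, hc0p, hc0top, hc0uniq⟩ := H 0 (by simp) (n + 2) (by omega) i₀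
      obtain ⟨cT, hT1, hT2, hT3, hT4, hT5⟩ := ih (n + 1) K hK' Ht w''
      have hcFlt : ∀ i : ι, i ≠ i₀ → (c0 i).val < n + 1 := by
        intro i hi
        have hlt := (c0 i).isLt
        have hne : c0 i ≠ ⟨n + 2 - 1, by omega⟩ := fun e => hi (hc0uniq i e)
        have : (c0 i).val ≠ n + 2 - 1 := fun e => hne (Fin.ext e)
        omega
      have hsubF : ∀ i : ι, i ≠ i₀ → ∃ c : (buildTree rest).NodeType → Fin K,
          (∀ u v, treeAdj (buildTree rest) u v → c u ≠ c v) ∧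
          c (root (buildTree rest)) = Fin.castLE hn2K (c0 i) ∧
          (∀ u, u ≠ root (buildTree rest) → (c u).val < K - 1) ∧
          (∀ b, ∃ x : Fin K, x.val < K - 1 ∧
            x ∉ (Finset.univ.filter (fun x : Fin K => x.val < n + 1)) ∧
            x ∉ (branchList (buildTree rest) b).map c) := by
        intro i hi
        apply free rest (n + 1) K hK' Ht (Fin.castLE hn2K (c0 i))
          (Finset.univ.filter (fun x : Fin K => x.val < n + 1))
        have hmem : Fin.castLE hn2K (c0 i) ∈
            Finset.univ.filter (fun x : Fin K => x.val < n + 1) := by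
          simp only [Finset.mem_filter, Finset.mem_univ, true_and, Fin.coe_castLE]
          exact hcFlt i hi
        rw [Finset.union_eq_left.mpr (Finset.singleton_subset_iff.mpr hmem)]
        calc ((Finset.univ.filter (fun x : Fin K => x.val < n + 1)).filter
                (fun x => x.val < K - 1)).card
            ≤ (Finset.univ.filter (fun x : Fin K => x.val < n + 1)).card :=
              Finset.card_le_card (Finset.filter_subset _ _)
          _ = n + 1 := card_filter_lt K (n + 1) (by omega)
      choose cF hF1 hF2 hF3 hF4 using hsubF
      set f : ∀ i : ι, (buildTree rest).NodeType → Fin K :=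
        fun i => if h : i = i₀ then cT else cF i h with hf
      have hfi0 : f i₀ = cT := by rw [hf]; simp
      have hfne : ∀ (i : ι) (h : i ≠ i₀), f i = cF i h := by
        intro i h; rw [hf]; simp [h]
      have hTroot : (cT (root (buildTree rest))).val = n + 1 ∨
          (cT (root (buildTree rest))).val = K - 1 := by
        by_cases hw : w'' = Sum.inl (root (buildTree rest))
        · exact Or.inr (hT3 _ hw.symm)
        · exact Or.inl (hT4 hw)
      have hfroot : ∀ (i : ι) (h : i ≠ i₀),
          (f i (root (buildTree rest))).val = (c0 i).val := by
        intro i h; rw [hfne i h, hF2 i h]; rfl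
      refine ⟨fun u => match u with
        | Sum.inl _ => ⟨n, by omega⟩
        | Sum.inr ⟨i, u'⟩ => f i u', ?_, ?_, ?_, rfl, ?_⟩
      · intro u v h
        rcases u with u0 | ⟨i, u'⟩
        · exact h.elim
        · rcases v with v0 | ⟨j, v'⟩
          · exact h.elim
          · rcases h with ⟨hij, hrec⟩ | ⟨hadj, hu, hv⟩
            · subst hij
              show f i u' ≠ f i v'
              by_cases hi : i = i₀
              · subst hi; rw [hfi0]; exact hT1 _ _ hrec
              · rw [hfne i hi]; exact hF1 i hi _ _ hrec
            · subst hu; subst hv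
              have hij : i ≠ j := by rintro rfl; exact g.loopless.irrefl i hadj
              show f i (root (buildTree rest)) ≠ f j (root (buildTree rest))
              by_cases hi : i = i₀
              · subst hi
                have hj : j ≠ i := fun e => hij e.symm
                rw [hfi0]
                intro e
                have he := congrArg Fin.val e
                rw [hfroot j hj] at he
                have := hcFlt j hj
                rcases hTroot with h' | h' <;> omega
              · by_cases hj : j = i₀
                · subst hj
                  rw [hfi0]
                  intro e
                  have he := congrArg Fin.val e
                  rw [hfroot i hi] at he
                  have := hcFlt i hi
                  rcases hTroot with h' | h' <;> omega
                · intro e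
                  have he := congrArg Fin.val e
                  rw [hfroot i hi, hfroot j hj] at he
                  exact hc0p i j hadj (Fin.ext he)
      · intro i u' hor
        show (f i u').val < K - 1
        by_cases hi : i = i₀
        · subst hi
          rw [hfi0]
          rcases hor with h | h
          · exact absurd rfl h
          · exact hT2 u' h
        · rw [hfne i hi]
          by_cases hu' : u' = root (buildTree rest)
          · subst hu'
            rw [hF2 i hi]
            exact lt_of_lt_of_le (c0 i).isLt hn2K1
          · exact hF3 i hi u' hu'
      · intro u' he
        show (f i₀ u').val = K - 1
        rw [hfi0]
        exact hT3 u' he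
      · intro i b' hor
        by_cases hi : i = i₀
        · subst hi
          rcases hor with h | h
          · exact absurd rfl h
          · obtain ⟨x, hx1, hx2, hx3⟩ := hT5 b' h
            refine ⟨x, by omega, hx2, ?_⟩
            rw [branchList_cons]
            intro hmem
            rcases List.mem_cons.mp hmem with h' | h'
            · have := congrArg Fin.val h'
              simp at this
              omega
            · replace h' : x ∈ (branchList (buildTree rest) b').map (f i) := by
                obtain ⟨u, hu, rfl⟩ := List.mem_map.mp h'
                obtain ⟨u', hu', rfl⟩ := List.mem_map.mp hu
                exact List.mem_map_of_mem (f := f i) hu'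
              have h'' : x ∈ (branchList (buildTree rest) b').map (f i) := h'
              rw [hfi0] at h''
              exact hx3 h''
        · obtain ⟨x, hx1, hx2, hx3⟩ := hF4 i hi b'
          have hxn : n + 1 ≤ x.val := by
            by_contra hlt
            exact hx2 (by simp only [Finset.mem_filter, Finset.mem_univ, true_and]; omega)
          refine ⟨x, by omega, hx1, ?_⟩
          rw [branchList_cons]
          intro hmem
          rcases List.mem_cons.mp hmem with h' | h'
          · have := congrArg Fin.val h'
            simp at this
            omega
          · replace h' : x ∈ (branchList (buildTree rest) b').map (f i) := by
              obtain ⟨u, hu, rfl⟩ := List.mem_map.mp h'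
              obtain ⟨u', hu', rfl⟩ := List.mem_map.mp hu
              exact List.mem_map_of_mem (f := f i) hu'
            have h'' : x ∈ (branchList (buildTree rest) b').map (f i) := h'
            rw [hfne i hi] at h''
            exact hx3 h''
    rcases w with wn | wb
    · rcases wn with w0 | ⟨i₀, w'⟩
      · -- the root is the target
        cases w0
        have hproper : ∃ c0 : ι → Fin (n + 2), ∀ a b, g.Adj a b → c0 a ≠ c0 b := by
          cases isEmpty_or_nonempty ι with
          | inl he => exact ⟨fun i => (he.false i).elim, fun a b _ => (he.false a).elim⟩
          | inr hne =>
            obtain ⟨v⟩ := hne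
            obtain ⟨c0, h1, -, -⟩ := H 0 (by simp) (n + 2) (by omega) v
            exact ⟨c0, h1⟩
        obtain ⟨c0, hc0⟩ := hproper
        have hsubF : ∀ i : ι, ∃ c : (buildTree rest).NodeType → Fin K,
            (∀ u v, treeAdj (buildTree rest) u v → c u ≠ c v) ∧
            c (root (buildTree rest)) = Fin.castLE hn2K (c0 i) ∧
            (∀ u, u ≠ root (buildTree rest) → (c u).val < K - 1) ∧
            (∀ b, ∃ x : Fin K, x.val < K - 1 ∧
              x ∉ insert (⟨K - 1, by omega⟩ : Fin K)
                (Finset.univ.filter (fun x : Fin K => x.val < n)) ∧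
              x ∉ (branchList (buildTree rest) b).map c) := by
          intro i
          apply free rest (n + 1) K hK' Ht (Fin.castLE hn2K (c0 i))
          have hsub2 : ((insert (⟨K - 1, by omega⟩ : Fin K)
                (Finset.univ.filter (fun x : Fin K => x.val < n)) ∪
                {Fin.castLE hn2K (c0 i)}).filter (fun x => x.val < K - 1)) ⊆
              (Finset.univ.filter (fun x : Fin K => x.val < n)) ∪
                {Fin.castLE hn2K (c0 i)} := by
            intro x hx
            simp only [Finset.mem_filter, Finset.mem_union, Finset.mem_insert,
              Finset.mem_singleton, Finset.mem_univ, true_and] at hx ⊢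
            rcases hx with ⟨h1 | h2, h3⟩
            · rcases h1 with h1 | h1
              · exfalso; rw [h1] at h3; simp at h3
              · exact Or.inl h1
            · exact Or.inr h2
          have h1 := Finset.card_le_card hsub2
          have h2 := Finset.card_union_le
            (Finset.univ.filter (fun x : Fin K => x.val < n))
            ({Fin.castLE hn2K (c0 i)} : Finset (Fin K))
          rw [card_filter_lt K n (by omega)] at h2
          simp only [Finset.card_singleton] at h2
          omega
        choose cF hF1 hF2 hF3 hF4 using hsubF
        refine ⟨fun u => match u with
          | Sum.inl _ => ⟨K - 1, by omega⟩
          | Sum.inr ⟨i, u'⟩ => cF i u', ?_, ?_, ?_, ?_, ?_⟩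
        · intro u v h
          rcases u with u0 | ⟨i, u'⟩
          · exact h.elim
          · rcases v with v0 | ⟨j, v'⟩
            · exact h.elim
            · rcases h with ⟨hij, hrec⟩ | ⟨hadj, hu, hv⟩
              · subst hij
                exact hF1 i _ _ hrec
              · subst hu; subst hv
                show cF i (root (buildTree rest)) ≠ cF j (root (buildTree rest))
                rw [hF2 i, hF2 j]
                exact fun e => hc0 i j hadj (Fin.castLE_injective hn2K e)
        · intro u hu
          rcases u with u0 | ⟨i, u'⟩
          · cases u0; exact absurd rfl hu
          · show (cF i u').val < K - 1
            by_cases hu' : u' = root (buildTree rest)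
            · subst hu'
              rw [hF2 i]
              exact lt_of_lt_of_le (c0 i).isLt hn2K1
            · exact hF3 i u' hu'
        · intro u hu
          rcases u with u0 | ⟨i, u'⟩
          · rfl
          · cases hu
        · intro hne; exact absurd rfl hne
        · rintro ⟨i, b'⟩ -
          obtain ⟨x, hx1, hx2, hx3⟩ := hF4 i b'
          have hxn : n ≤ x.val := by
            by_contra hlt
            exact hx2 (Finset.mem_insert_of_mem
              (by simp only [Finset.mem_filter, Finset.mem_univ, true_and]; omega))
          refine ⟨x, hxn, hx1, ?_⟩
          rw [branchList_cons]
          intro hmem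
          rcases List.mem_cons.mp hmem with h' | h'
          · apply hx2
            rw [h']
            exact Finset.mem_insert_self _ _
          · replace h' : x ∈ (branchList (buildTree rest) b').map (cF i) := by
              obtain ⟨u, hu, rfl⟩ := List.mem_map.mp h'
              obtain ⟨u', hu', rfl⟩ := List.mem_map.mp hu
              exact List.mem_map_of_mem (f := cF i) hu'
            exact hx3 h'
      · -- target is a node strictly below the root
        obtain ⟨c, hp, h1, h2, h3, h5⟩ := key i₀ (Sum.inl w')
        refine ⟨c, hp, ?_, ?_, ?_, ?_⟩
        · intro u hu
          rcases u with u0 | ⟨i, u'⟩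
          · cases u0
            rw [show c (Sum.inl PUnit.unit) = ⟨n, by omega⟩ from h3]
            show n < K - 1
            omega
          · apply h1
            by_cases hi : i = i₀
            · subst hi
              right
              intro e
              injection e with e'
              subst e'
              exact hu rfl
            · exact Or.inl hi
        · intro u hu
          have hu' : u = Sum.inr ⟨i₀, w'⟩ := Sum.inl.inj hu
          subst hu'
          exact h2 w' rfl
        · intro _
          show (c (Sum.inl PUnit.unit)).val = n
          rw [h3]
        · rintro ⟨i, b'⟩ -
          exact h5 i b' (Or.inr (by simp))
    · -- target is a branch
      obtain ⟨i₀, b₀⟩ := wb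
      obtain ⟨c, hp, h1, h2, h3, h5⟩ := key i₀ (Sum.inr b₀)
      refine ⟨c, hp, ?_, ?_, ?_, ?_⟩
      · intro u _
        rcases u with u0 | ⟨i, u'⟩
        · cases u0
          rw [show c (Sum.inl PUnit.unit) = ⟨n, by omega⟩ from h3]
          show n < K - 1
          omega
        · exact h1 i u' (Or.inr (by simp))
      · intro u hu; exact absurd hu (by simp)
      · intro _
        show (c (Sum.inl PUnit.unit)).val = n
        rw [h3]
      · rintro ⟨i, b'⟩ hb
        apply h5
        by_cases hi : i = i₀
        · subst hi
          right
          intro e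
          rw [Sum.inr.injEq] at e
          subst e
          exact hb rfl
        · exact Or.inl hi


lemma twincutList_length : ∀ m, (twincutList m).length = m
  | 0 => rfl
  | m + 1 => by
      simp [twincutList, twincutList_length m]

lemma twincutList_getElem (m i : ℕ) (h : i < (twincutList m).length) :
    (twincutList m)[i] = twincutG (i + 2) := by
  induction m with
  | zero => simp [twincutList] at h
  | succ m ih =>
    have hlen := twincutList_length m
    by_cases hi : i < (twincutList m).length
    · exact (List.getElem_append_left
        (bs := [realizationSigma (buildTree (twincutList m))]) hi).trans (ih hi)
    · have hlen' := twincutList_length (m + 1)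
      have him : i = m := by omega
      subst him
      exact List.getElem_concat_length (l := twincutList i)
        (a := realizationSigma (buildTree (twincutList i))) (i := i) (by omega) h

lemma main_aux : ∀ k (hk : 1 ≤ k), ∀ v : (twincutG k).1,
    ∃ c : (twincutG k).1 → Fin k,
      (∀ a b, (twincutG k).2.Adj a b → c a ≠ c b) ∧
      c v = ⟨k - 1, Nat.sub_lt hk Nat.one_pos⟩ ∧
      (∀ u, c u = ⟨k - 1, Nat.sub_lt hk Nat.one_pos⟩ → u = v) := by
  intro k
  induction k using Nat.strong_induction_on with
  | _ k IH =>
    intro hk v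
    rcases k with _ | _ | m
    · exact absurd hk (by omega)
    · refine ⟨fun _ => ⟨0, by omega⟩, ?_, rfl, ?_⟩
      · intro a b h
        exact h.elim
      · intro u _
        rfl
    · 
      have hlen := twincutList_length m
      have hK : 0 + (twincutList m).length + 2 = m + 2 := by omega
      have H : Hyp 0 (twincutList m) := by
        intro i h m' hm'
        rw [List.get_eq_getElem, twincutList_getElem m i h]
        intro v'
        have e : m' = i + 2 := by omega
        subst e
        exact IH (i + 2) (by omega) (by omega) v'
      obtain ⟨cn, hp, h1, h2, h3, h5⟩ := target (twincutList m) 0 (m + 2) hK H v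
      classical
      choose X hX1 hX2 hX3 using h5
      refine ⟨fun x => match x with
        | Sum.inl u => cn u
        | Sum.inr b => if hb : v = Sum.inr b then ⟨m + 2 - 1, by omega⟩ else X b hb,
        ?_, ?_, ?_⟩
      · -- properness
        have hnb : ∀ (u : (buildTree (twincutList m)).NodeType)
            (b : (buildTree (twincutList m)).Branch), onBranch (buildTree (twincutList m)) b u →
            cn u ≠ (if hb : v = Sum.inr b then (⟨m + 2 - 1, by omega⟩ : Fin (m + 2))
              else X b hb) := by
          intro u b hob
          by_cases hb : v = Sum.inr b
          · rw [dif_pos hb]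
            have hlt : (cn u).val < m + 2 - 1 := h1 u (by rw [hb]; intro e; cases e)
            intro e
            have := congrArg Fin.val e
            simp at this
            omega
          · rw [dif_neg hb]
            intro e
            apply hX3 b hb
            rw [← e]
            exact List.mem_map_of_mem (f := cn) (mem_branchList (buildTree (twincutList m)) b u hob)
        intro a b hadj
        have hadj' : (STree.realization (buildTree (twincutList m))).Adj a b := hadj
        replace hadj' := (SimpleGraph.fromRel_adj _ _ _).mp hadj'
        obtain ⟨hne, hrel⟩ := hadj'
        rcases a with u | b₁ <;> rcases b with u' | b₂
        · rcases hrel with h | h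
          · exact hp u u' h
          · exact (hp u' u h).symm
        · rcases hrel with h | h
          · exact hnb u b₂ h
          · exact hnb u b₂ h
        · rcases hrel with h | h
          · exact (hnb u' b₁ h).symm
          · exact (hnb u' b₁ h).symm
        · rcases hrel with h | h <;> exact h.elim
      · -- v gets the last color
        rcases v with u | b
        · show cn u = ⟨m + 2 - 1, by omega⟩
          exact Fin.ext (h2 u rfl)
        · exact dif_pos rfl
      · -- uniqueness
        intro u hu
        rcases u with u' | b
        · by_cases he : Sum.inl u' = v
          · exact he
          · exfalso
            have hlt := h1 u' he
            have hu' : cn u' = ⟨m + 2 - 1, by omega⟩ := hu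
            have := congrArg Fin.val hu'
            simp at this
            omega
        · by_cases hb : v = Sum.inr b
          · exact hb.symm
          · exfalso
            have hlt := hX2 b hb
            have : (X b hb) = (⟨m + 2 - 1, by omega⟩ : Fin (m + 2)) := by
              have heq : (if hb' : v = Sum.inr b then (⟨m + 2 - 1, by omega⟩ : Fin (m + 2))
                  else X b hb') = ⟨m + 2 - 1, by omega⟩ := hu
              rwa [dif_neg hb] at heq
            have := congrArg Fin.val this
            simp at this
            omega

end TwincutProof

/-- for every vertex `v` of `G_k` there is a proper `k`-coloring
of `G_k` in which `v` is the unique vertex with the last color. -/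
theorem twincut_coloring_unique_color (k : ℕ) (hk : 1 ≤ k) (v : (twincutG k).1) :
    ∃ c : (twincutG k).1 → Fin k,
      (∀ a b, (twincutG k).2.Adj a b → c a ≠ c b) ∧
      c v = ⟨k - 1, by omega⟩ ∧
      (∀ u, c u = ⟨k - 1, by omega⟩ → u = v) := by
  exact TwincutProof.main_aux k hk v
end
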